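/- The function z ↦ y^{1/2}|θ(z)|², where z = x+iy, is invariant under the action of Γ₀(4) on the upper half-plane: for γ = (a b; c d) ∈ Γ₀(4), Im(γz)^{1/2}|θ(γz)|² = Im(z)^{1/2}|θ(z)|². -/

import Mathlib

open Complex CongruenceSubgroup

/-- The Jacobi theta function `θ(z) = ∑_{n ∈ ℤ} exp(2πin²z)`. -/
noncomputable def jacobiThetaFn (z : ℂ) : ℂ :=
  ∑' n : ℤ, Complex.exp (2 * Real.pi * Complex.I * (n : ℂ) ^ 2 * z)

/-- The Möbius action of `γ ∈ SL₂(ℤ)` on `ℂ`: `γz = (az+b)/(cz+d)`. -/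
noncomputable def moebius (γ : Matrix.SpecialLinearGroup (Fin 2) ℤ) (z : ℂ) : ℂ :=
  (((γ : Matrix (Fin 2) (Fin 2) ℤ) 0 0 : ℂ) * z + ((γ : Matrix (Fin 2) (Fin 2) ℤ) 0 1 : ℂ)) /
    (((γ : Matrix (Fin 2) (Fin 2) ℤ) 1 0 : ℂ) * z + ((γ : Matrix (Fin 2) (Fin 2) ℤ) 1 1 : ℂ))

noncomputable def thetaG (z : ℂ) : ℝ :=
  Real.sqrt z.im * ‖jacobiThetaFn z‖ ^ 2

lemma jacobiTheta_neg_inv {z : ℂ} (hz : 0 < z.im) :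
    jacobiTheta (-z)⁻¹ = (-I * z) ^ (1 / 2 : ℂ) * jacobiTheta z := by
  simpa only [UpperHalfPlane.modular_S_smul, UpperHalfPlane.coe_mk] using
    jacobiTheta_S_smul ⟨z, hz⟩

lemma jacobiTheta_add_two' (z : ℂ) : jacobiTheta (z + 2) = jacobiTheta z := by
  rw [add_comm]; exact jacobiTheta_two_add z

lemma jacobiTheta_add_two_int (z : ℂ) (n : ℤ) : jacobiTheta (z + 2 * n) = jacobiTheta z := by
  induction n using Int.induction_on with
  | zero => simp
  | succ k ih =>
      push_cast at ih ⊢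
      have e : z + 2 * ((k : ℂ) + 1) = (z + 2 * k) + 2 := by ring
      rw [e, jacobiTheta_add_two', ih]
  | pred k ih =>
      push_cast at ih ⊢
      have h := jacobiTheta_add_two' (z + 2 * (-(k : ℂ) - 1))
      have h2 : jacobiTheta (z + 2 * (-(k:ℂ) - 1)) = jacobiTheta (z + 2 * (-(k:ℂ))) := by
        rw [← h]; congr 1; ring
      rw [h2, ih]

lemma abs_sq_cpow_half {w : ℂ} (hw : w ≠ 0) :
    ‖w ^ (1 / 2 : ℂ)‖ ^ 2 = ‖w‖ := by
  rw [Complex.norm_cpow_of_ne_zero hw]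
  have h1 : ((1 : ℂ) / 2).re = 1 / 2 := by norm_num
  have h2 : ((1 : ℂ) / 2).im = 0 := by norm_num
  rw [h1, h2, mul_zero, Real.exp_zero, div_one,
    ← Real.rpow_natCast (‖w‖ ^ (1 / 2 : ℝ)) 2, ← Real.rpow_mul (norm_nonneg w)]
  norm_num

lemma theta_sq_V {σ : ℂ} (hσ : 0 < σ.im) :
    ‖jacobiTheta (σ / (2 * σ + 1))‖ ^ 2
      = ‖2 * σ + 1‖ * ‖jacobiTheta σ‖ ^ 2 := by
  have hσ0 : σ ≠ 0 := fun h => by simp [h] at hσ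
  have hden : (2 * σ + 1 : ℂ) ≠ 0 := by
    intro h
    have h1 : (2 * σ + 1 : ℂ).im = 2 * σ.im := by simp
    rw [h, Complex.zero_im] at h1; linarith
  set σ' : ℂ := (-σ)⁻¹ with hσ'def
  have hσ'im : σ'.im = σ.im / Complex.normSq σ := by
    simp [hσ'def, Complex.inv_im, Complex.normSq_neg, neg_div]
  have hσ'pos : 0 < σ'.im := by
    rw [hσ'im]; exact div_pos hσ (Complex.normSq_pos.mpr hσ0)
  have hu : 0 < (σ' - 2).im := by
    have : (σ' - 2).im = σ'.im := by simp
    rw [this]; exact hσ'pos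
  have hu0 : σ' - 2 ≠ 0 := fun h => by rw [h] at hu; simp at hu
  have e1 : (-(σ' - 2))⁻¹ = σ / (2 * σ + 1) := by
    have hval : -(σ' - 2) = (2 * σ + 1) / σ := by
      rw [hσ'def]; field_simp [hσ0]
      ring
    rw [hval, inv_div]
  have e2 : jacobiTheta (σ' - 2) = jacobiTheta σ' := by
    have h := jacobiTheta_add_two_int σ' (-1)
    push_cast at h
    rw [← h]; congr 1; ring
  have k1 := jacobiTheta_neg_inv hu
  have k2 := jacobiTheta_neg_inv hσ
  rw [e1, e2, k2] at k1
  rw [k1]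
  have hI1 : (-I * (σ' - 2)) ≠ 0 := mul_ne_zero (by simp [I_ne_zero]) hu0
  have hI2 : (-I * σ) ≠ 0 := mul_ne_zero (by simp [I_ne_zero]) hσ0
  rw [show (-I * (σ' - 2)) ^ (1/2 : ℂ) * ((-I * σ) ^ (1/2 : ℂ) * jacobiTheta σ)
      = ((-I * (σ' - 2)) ^ (1/2 : ℂ) * (-I * σ) ^ (1/2 : ℂ)) * jacobiTheta σ by ring,
    norm_mul, norm_mul, mul_pow, mul_pow, abs_sq_cpow_half hI1, abs_sq_cpow_half hI2]
  have habs : ‖-I * (σ' - 2)‖ * ‖-I * σ‖ = ‖2 * σ + 1‖ := by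
    rw [← norm_mul]
    congr 1
    rw [hσ'def, show -I * ((-σ)⁻¹ - 2) * (-I * σ) = (I * I) * (((-σ)⁻¹ - 2) * σ) by ring, I_mul_I]
    field_simp [hσ0]
    ring
  rw [← habs]; try ring
lemma jacobiThetaFn_eq (z : ℂ) : jacobiThetaFn z = jacobiTheta (2 * z) := by
  refine tsum_congr fun n => ?_
  congr 1
  ring

lemma thetaG_eq (z : ℂ) : thetaG z = Real.sqrt z.im * ‖jacobiTheta (2 * z)‖ ^ 2 := by
  rw [thetaG, jacobiThetaFn_eq]

lemma im_moebius' {a b c d : ℝ} (h : a * d - b * c = 1) (z : ℂ) :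
    (((a : ℂ) * z + b) / ((c : ℂ) * z + d)).im = z.im / Complex.normSq ((c : ℂ) * z + d) := by
  rw [Complex.div_im]
  have h1 : ((a : ℂ) * z + b).im = a * z.im := by simp
  have h2 : ((a : ℂ) * z + b).re = a * z.re + b := by simp
  have h3 : ((c : ℂ) * z + d).im = c * z.im := by simp
  have h4 : ((c : ℂ) * z + d).re = c * z.re + d := by simp
  rw [h1, h2, h3, h4, div_sub_div_same]
  congr 1
  linear_combination z.im * h

lemma lin_ne_zero' {r : ℝ} {z : ℂ} (hz : 0 < z.im) : ((r : ℂ) * z + 1) ≠ 0 := by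
  intro h0
  rcases eq_or_ne r 0 with hr | hr
  · rw [hr] at h0; simp at h0
  · have him : ((r : ℂ) * z + 1).im = r * z.im := by simp
    rw [h0, Complex.zero_im] at him
    exact mul_ne_zero hr (ne_of_gt hz) him.symm

lemma im_div_lin (r : ℝ) (z : ℂ) :
    (z / ((r : ℂ) * z + 1)).im = z.im / Complex.normSq ((r : ℂ) * z + 1) := by
  have h := im_moebius' (a := 1) (b := 0) (c := r) (d := 1) (by norm_num) z
  simpa using h

lemma im_div_lin_pos {r : ℝ} {z : ℂ} (hz : 0 < z.im) : 0 < (z / ((r : ℂ) * z + 1)).im := by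
  rw [im_div_lin]
  exact div_pos hz (Complex.normSq_pos.mpr (lin_ne_zero' hz))

lemma thetaG_add_int (z : ℂ) (n : ℤ) : thetaG (z + n) = thetaG z := by
  rw [thetaG_eq, thetaG_eq]
  have him : (z + (n : ℂ)).im = z.im := by simp
  have hth : jacobiTheta (2 * (z + n)) = jacobiTheta (2 * z) := by
    have h := jacobiTheta_add_two_int (2 * z) n
    rw [← h]; congr 1; ring
  rw [him, hth]

lemma thetaG_V {z : ℂ} (hz : 0 < z.im) : thetaG (z / (4 * z + 1)) = thetaG z := by
  have him2 : (2 * z).im = 2 * z.im := by simp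
  have hσ : 0 < (2 * z).im := by rw [him2]; linarith
  have key := theta_sq_V hσ
  rw [show (2 * (2 * z) + 1 : ℂ) = 4 * z + 1 by ring,
    show (2 * z) / (4 * z + 1) = 2 * (z / (4 * z + 1)) by rw [mul_div_assoc]] at key
  have hden : (4 * z + 1 : ℂ) ≠ 0 := by
    have h := lin_ne_zero' (r := 4) hz; push_cast at h; exact h
  have himd : (z / (4 * z + 1)).im = z.im / Complex.normSq (4 * z + 1) := by
    have h := im_div_lin 4 z; push_cast at h; exact h
  rw [thetaG_eq, thetaG_eq, key, himd,
    Real.sqrt_div (le_of_lt hz), ← Complex.norm_def]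
  have habs : ‖(4 * z + 1 : ℂ)‖ ≠ 0 := by
    rw [norm_ne_zero_iff]; exact hden
  field_simp

lemma hden_int (m : ℤ) {z : ℂ} (hz : 0 < z.im) : (4 * (m : ℂ) * z + 1) ≠ 0 := by
  have h := lin_ne_zero' (r := (4 * m : ℝ)) hz
  push_cast at h
  exact h

lemma him_int (m : ℤ) (z : ℂ) :
    (z / (4 * (m : ℂ) * z + 1)).im = z.im / Complex.normSq (4 * (m : ℂ) * z + 1) := by
  have h := im_div_lin (4 * m : ℝ) z
  push_cast at h
  rw [show ((4 : ℂ) * m) * z = 4 * (m:ℂ) * z by ring] at h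
  exact h

lemma him_int_pos (m : ℤ) {z : ℂ} (hz : 0 < z.im) : 0 < (z / (4 * (m : ℂ) * z + 1)).im := by
  rw [him_int]
  exact div_pos hz (Complex.normSq_pos.mpr (hden_int m hz))

lemma thetaG_V_nat (k : ℕ) : ∀ {z : ℂ}, 0 < z.im → thetaG (z / (4 * (k : ℂ) * z + 1)) = thetaG z := by
  induction k with
  | zero => intro z hz; simp
  | succ k ih =>
      intro z hz
      have hdk := hden_int (k : ℤ) hz
      push_cast at hdk
      have hdk1 := hden_int ((k : ℤ) + 1) hz
      push_cast at hdk1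
      have hw : 0 < (z / (4 * (k : ℂ) * z + 1)).im := by
        have := him_int_pos (k : ℤ) hz; push_cast at this; exact this
      set w := z / (4 * (k : ℂ) * z + 1) with hwdef
      have e : (4 * w + 1 : ℂ) = (4 * ((k : ℂ) + 1) * z + 1) / (4 * (k : ℂ) * z + 1) := by
        rw [hwdef, ← mul_div_assoc, div_add' _ _ _ hdk]
        congr 1; ring
      have hiden : z / (4 * ((k : ℂ) + 1) * z + 1) = w / (4 * w + 1) := by
        rw [e, div_div_eq_mul_div, hwdef, div_mul_cancel₀ _ hdk]
      push_cast
      rw [hiden, thetaG_V hw, hwdef]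
      exact ih hz

lemma thetaG_V_int (m : ℤ) {z : ℂ} (hz : 0 < z.im) :
    thetaG (z / (4 * (m : ℂ) * z + 1)) = thetaG z := by
  obtain ⟨k, rfl | rfl⟩ := Int.eq_nat_or_neg m
  · push_cast
    exact thetaG_V_nat k hz
  · push_cast
    have hden : (4 * -(k : ℂ) * z + 1) ≠ 0 := by
      have h := hden_int (-(k : ℤ)) hz; push_cast at h; exact h
    have hw : 0 < (z / (4 * -(k : ℂ) * z + 1)).im := by
      have h := him_int_pos (-(k : ℤ)) hz; push_cast at h; exact h
    set w := z / (4 * -(k : ℂ) * z + 1) with hwdef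
    have e : 4 * (k : ℂ) * w + 1 = 1 / (4 * -(k : ℂ) * z + 1) := by
      rw [hwdef, ← mul_div_assoc, div_add' _ _ _ hden]
      congr 1; ring
    have hclaim : w / (4 * (k : ℂ) * w + 1) = z := by
      rw [e, div_div_eq_mul_div, div_one, hwdef, div_mul_cancel₀ _ hden]
    have h2 := thetaG_V_nat k (z := w) hw
    rw [hclaim] at h2
    exact h2.symm

lemma exists_shift {a c : ℤ} (hc : c ≠ 0) (ha : a % 2 = 1) (h4 : (4:ℤ) ∣ c) :
    ∃ n : ℤ, 2 * (a + n * c).natAbs < c.natAbs := by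
  set C : ℤ := (c.natAbs : ℤ) with hC
  have hCpos : 0 < C := by omega
  have hr0 : 0 ≤ a % C := Int.emod_nonneg a (by omega)
  have hr1 : a % C < C := Int.emod_lt_of_pos a hCpos
  have heq : C * (a / C) + a % C = a := Int.mul_ediv_add_emod a C
  obtain ⟨u, hu⟩ : (4:ℤ) ∣ C := by omega
  have hmod : a % C = a - C * (a / C) := Int.emod_def a C
  set s : ℤ := u * (a / C) with hs
  have hodd : a % C = a - 4 * s := by linear_combination hmod - (a / C) * hu + 4 * hs
  rcases Int.natAbs_eq c with h | h
  · have hcC : c = C := by rw [hC]; exact h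
    rcases lt_or_ge (2 * (a % C)) C with hlt | hge
    · refine ⟨-(a / C), ?_⟩
      have e1 : a + -(a / C) * c = a % C := by rw [hcC]; linear_combination -heq
      rw [e1]; omega
    · refine ⟨-(a / C) - 1, ?_⟩
      have e1 : a + (-(a / C) - 1) * c = a % C - C := by rw [hcC]; linear_combination -heq
      rw [e1]; omega
  · have hcC : c = -C := by rw [hC]; exact h
    rcases lt_or_ge (2 * (a % C)) C with hlt | hge
    · refine ⟨a / C, ?_⟩
      have e1 : a + (a / C) * c = a % C := by rw [hcC]; linear_combination -heq
      rw [e1]; omega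
    · refine ⟨a / C + 1, ?_⟩
      have e1 : a + (a / C + 1) * c = a % C - C := by rw [hcC]; linear_combination -heq
      rw [e1]; omega

lemma exists_m {a' : ℤ} (c' : ℤ) (ha : a' ≠ 0) :
    ∃ m : ℤ, 2 * (c' + m * a').natAbs ≤ a'.natAbs := by
  set A : ℤ := (a'.natAbs : ℤ) with hA
  have hApos : 0 < A := by omega
  have hr0 : 0 ≤ c' % A := Int.emod_nonneg c' (by omega)
  have hr1 : c' % A < A := Int.emod_lt_of_pos c' hApos
  have heq : A * (c' / A) + c' % A = c' := Int.mul_ediv_add_emod c' A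
  rcases Int.natAbs_eq a' with h | h
  · have hcA : a' = A := by rw [hA]; exact h
    rcases le_or_gt (2 * (c' % A)) A with hle | hgt
    · refine ⟨-(c' / A), ?_⟩
      have e1 : c' + -(c' / A) * a' = c' % A := by rw [hcA]; linear_combination -heq
      rw [e1]; omega
    · refine ⟨-(c' / A) - 1, ?_⟩
      have e1 : c' + (-(c' / A) - 1) * a' = c' % A - A := by rw [hcA]; linear_combination -heq
      rw [e1]; omega
  · have hcA : a' = -A := by rw [hA]; exact h
    rcases le_or_gt (2 * (c' % A)) A with hle | hgt
    · refine ⟨c' / A, ?_⟩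
      have e1 : c' + (c' / A) * a' = c' % A := by rw [hcA]; linear_combination -heq
      rw [e1]; omega
    · refine ⟨c' / A + 1, ?_⟩
      have e1 : c' + (c' / A + 1) * a' = c' % A - A := by rw [hcA]; linear_combination -heq
      rw [e1]; omega

lemma den_ne_zero' {c d : ℝ} (h : ¬ (c = 0 ∧ d = 0)) {z : ℂ} (hz : 0 < z.im) :
    ((c : ℂ) * z + d) ≠ 0 := by
  intro h0
  rcases eq_or_ne c 0 with hc | hc
  · subst hc
    simp only [ofReal_zero, zero_mul, zero_add] at h0
    exact h ⟨rfl, by exact_mod_cast h0⟩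
  · have him : ((c : ℂ) * z + d).im = c * z.im := by simp
    rw [h0, Complex.zero_im] at him
    exact mul_ne_zero hc (ne_of_gt hz) him.symm

lemma int_den_ne {a b c d : ℤ} (hdet : a * d - b * c = 1) {z : ℂ} (hz : 0 < z.im) :
    ((c : ℂ) * z + (d : ℂ)) ≠ 0 := by
  have hnb : ¬ ((c : ℝ) = 0 ∧ (d : ℝ) = 0) := by
    rintro ⟨h1, h2⟩
    have hc0 : c = 0 := by exact_mod_cast h1
    have hd0 : d = 0 := by exact_mod_cast h2
    rw [hc0, hd0] at hdet
    simp at hdet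
  have h := den_ne_zero' hnb hz
  push_cast at h
  exact h

lemma int_im_moebius {a b c d : ℤ} (hdet : a * d - b * c = 1) (z : ℂ) :
    (((a : ℂ) * z + b) / ((c : ℂ) * z + d)).im = z.im / Complex.normSq ((c : ℂ) * z + d) := by
  have hdetR : (a : ℝ) * d - (b : ℝ) * c = 1 := by exact_mod_cast hdet
  have h := im_moebius' hdetR z
  push_cast at h
  exact h

lemma thetaG_invariant : ∀ k : ℕ, ∀ a b c d : ℤ, a * d - b * c = 1 → (4:ℤ) ∣ c → c.natAbs = k →
    ∀ z : ℂ, 0 < z.im → thetaG (((a : ℂ) * z + b) / ((c : ℂ) * z + d)) = thetaG z := by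
  intro k
  induction k using Nat.strong_induction_on with
  | _ k IH =>
  intro a b c d hdet h4 hk z hz
  rcases eq_or_ne c 0 with rfl | hc0
  · have had : a * d = 1 := by linear_combination hdet
    rcases Int.mul_eq_one_iff_eq_one_or_neg_one.mp had with ⟨rfl, rfl⟩ | ⟨rfl, rfl⟩
    · have e : (((1:ℤ) : ℂ) * z + (b : ℂ)) / (((0:ℤ) : ℂ) * z + ((1:ℤ) : ℂ)) = z + (b : ℂ) := by
        push_cast
        rw [one_mul, zero_mul, zero_add, div_one]
      rw [e]
      exact thetaG_add_int z b
    · have e : (((-1:ℤ) : ℂ) * z + (b : ℂ)) / (((0:ℤ) : ℂ) * z + ((-1:ℤ) : ℂ))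
          = z + ((-b : ℤ) : ℂ) := by
        push_cast
        rw [div_eq_iff (by simp : ((0:ℂ) * z + -1) ≠ 0)]
        ring
      rw [e]
      exact thetaG_add_int z (-b)
  · have ha_odd : a % 2 = 1 := by
      rcases Int.even_or_odd a with ⟨t, ht⟩ | ⟨t, ht⟩
      · exfalso
        obtain ⟨u, hu⟩ := h4
        have h2 : 2 * (t * d - 2 * (b * u)) = 1 := by linear_combination hdet - d * ht + b * hu
        omega
      · omega
    obtain ⟨n, hn⟩ := exists_shift hc0 ha_odd h4
    obtain ⟨ct, hct⟩ := h4
    set a2 : ℤ := a + n * c with ha2def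
    set b2 : ℤ := b + n * d with hb2def
    have ha2_odd : a2 % 2 = 1 := by
      have e : a2 = a + 2 * (n * (2 * ct)) := by rw [ha2def, hct]; ring
      omega
    have ha2ne : a2 ≠ 0 := by omega
    obtain ⟨m, hm⟩ := exists_m ct ha2ne
    set c2 : ℤ := c + 4 * (m * a2) with hc2def
    set d2 : ℤ := d + 4 * (m * b2) with hd2def
    set w : ℤ := ct + m * a2 with hwdef
    have e4 : c2 = 4 * w := by rw [hc2def, hwdef, hct]; ring
    have hdet2 : a2 * d2 - b2 * c2 = 1 := by
      rw [hd2def, hc2def, hb2def, ha2def]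
      linear_combination hdet
    have hc2dvd : (4:ℤ) ∣ c2 := ⟨w, e4⟩
    have hsize : c2.natAbs < k := by omega
    have hIH := IH c2.natAbs hsize a2 b2 c2 d2 hdet2 hc2dvd rfl z hz
    have hden1 : ((c : ℂ) * z + d) ≠ 0 := int_den_ne hdet hz
    have hden2 : ((c2 : ℂ) * z + d2) ≠ 0 := int_den_ne hdet2 hz
    set W : ℂ := ((a2 : ℂ) * z + b2) / ((c2 : ℂ) * z + d2) with hW
    have hWim : 0 < W.im := by
      rw [hW, int_im_moebius hdet2]
      exact div_pos hz (Complex.normSq_pos.mpr hden2)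
    have ha2C : ((a2 : ℤ) : ℂ) = (a : ℂ) + n * c := by rw [ha2def]; push_cast; ring
    have hb2C : ((b2 : ℤ) : ℂ) = (b : ℂ) + n * d := by rw [hb2def]; push_cast; ring
    have hc2C : ((c2 : ℤ) : ℂ) = (c : ℂ) + 4 * (m * a2) := by rw [hc2def]; push_cast; ring
    have hd2C : ((d2 : ℤ) : ℂ) = (d : ℂ) + 4 * (m * b2) := by rw [hd2def]; push_cast; ring
    have key1 : 4 * ((-m : ℤ) : ℂ) * W + 1 = ((c : ℂ) * z + d) / ((c2 : ℂ) * z + d2) := by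
      rw [hW, ← mul_div_assoc, div_add' _ _ _ hden2]
      congr 1
      rw [hc2C, hd2C]
      push_cast
      ring
    have key2 : ((a : ℂ) * z + b) / ((c : ℂ) * z + d)
        = W / (4 * ((-m : ℤ) : ℂ) * W + 1) + ((-n : ℤ) : ℂ) := by
      rw [key1, div_div_eq_mul_div, hW, div_mul_cancel₀ _ hden2, div_add' _ _ _ hden1]
      congr 1
      rw [ha2C, hb2C]
      push_cast
      ring
    rw [key2, thetaG_add_int _ (-n), thetaG_V_int (-m) hWim, hW]
    exact hIH

/-- `y^{1/2}|θ(z)|²` is invariant under `Γ₀(4)`. -/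
theorem theta_invariance (γ : Matrix.SpecialLinearGroup (Fin 2) ℤ) (hγ : γ ∈ Gamma0 4)
    (z : ℂ) (hz : 0 < z.im) :
    Real.sqrt (moebius γ z).im * ‖jacobiThetaFn (moebius γ z)‖ ^ 2 =
      Real.sqrt z.im * ‖jacobiThetaFn z‖ ^ 2 := by
  have hdet := γ.prop
  rw [Matrix.det_fin_two] at hdet
  have h4 : (4 : ℤ) ∣ ((γ : Matrix (Fin 2) (Fin 2) ℤ) 1 0) := by
    have h := Gamma0_mem.mp hγ
    have h2 : ((((γ : Matrix (Fin 2) (Fin 2) ℤ) 1 0 : ℤ) : ZMod 4)) = 0 := by exact_mod_cast h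
    exact_mod_cast (ZMod.intCast_zmod_eq_zero_iff_dvd _ 4).mp h2
  show thetaG (moebius γ z) = thetaG z
  rw [moebius]
  exact thetaG_invariant _ _ _ _ _ hdet h4 rfl z hz
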